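/- Let n ∈ S² and let G(x) = α exp(-½(x-μ)ᵀΣ⁻¹(x-μ)). The vector field W(x) = 𝟙[nᵀ(x-μ) ≥ 0]·∇log(1-G(x)) satisfies ∫_{ℝ³} G(x)·W(x) dx = c·n' for some scalar c and vector n' collinear with Σ⁻¹-weighted direction of n; in particular, for an isotropic Gaussian (Σ = s²I), ∫_{ℝ³} G(x)W(x) dx is a nonzero scalar multiple of n. -/

import Mathlib

open scoped RealInnerProductSpace
open MeasureTheory Real

noncomputable section

-- integrability of gaussian on fin-dim inner product space
lemma aux_gauss_int {V : Type*} [NormedAddCommGroup V] [InnerProductSpace ℝ V]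
    [FiniteDimensional ℝ V] [MeasurableSpace V] [BorelSpace V] {b : ℝ} (hb : 0 < b) :
    Integrable (fun v : V => Real.exp (-b * ‖v‖ ^ 2)) := by
  have h := (GaussianFourier.integrable_cexp_neg_mul_sq_norm_add (V := V)
      (b := (b : ℂ)) (by simpa using hb) 0 (0 : V)).norm
  simpa [Complex.norm_exp, ← Complex.ofReal_pow] using h

lemma aux_gauss_int_mul_norm {V : Type*} [NormedAddCommGroup V] [InnerProductSpace ℝ V]
    [FiniteDimensional ℝ V] [MeasurableSpace V] [BorelSpace V] {b : ℝ} (hb : 0 < b) :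
    Integrable (fun v : V => Real.exp (-b * ‖v‖ ^ 2) * ‖v‖) := by
  have h1 := aux_gauss_int (V := V) hb
  have h2 := (aux_gauss_int (V := V) (half_pos hb)).const_mul (2 / b)
  refine (h1.add h2).mono' ?_ ?_
  · exact ((Real.continuous_exp.comp (by continuity)).mul continuous_norm).aestronglyMeasurable
  · filter_upwards with v
    have hn0 : (0:ℝ) ≤ ‖v‖ := norm_nonneg v
    have e1 : ‖v‖ ≤ 1 + ‖v‖ ^ 2 := by nlinarith
    have e2 : (b / 2) * ‖v‖ ^ 2 ≤ Real.exp ((b / 2) * ‖v‖ ^ 2) := by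
      linarith [Real.add_one_le_exp ((b / 2) * ‖v‖ ^ 2)]
    have e3 : ‖v‖ ^ 2 ≤ (2 / b) * Real.exp ((b / 2) * ‖v‖ ^ 2) := by
      have h4 := mul_le_mul_of_nonneg_left e2 (by positivity : (0:ℝ) ≤ 2 / b)
      calc ‖v‖ ^ 2 = (2 / b) * ((b / 2) * ‖v‖ ^ 2) := by field_simp
        _ ≤ _ := h4
    have h3 : Real.exp (-b * ‖v‖ ^ 2) * Real.exp ((b / 2) * ‖v‖ ^ 2)
        = Real.exp (-(b / 2) * ‖v‖ ^ 2) := by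
      rw [← Real.exp_add]; ring_nf
    have hp := Real.exp_pos (-b * ‖v‖ ^ 2)
    rw [Real.norm_eq_abs, abs_of_nonneg (by positivity)]
    calc Real.exp (-b * ‖v‖ ^ 2) * ‖v‖
        ≤ Real.exp (-b * ‖v‖ ^ 2) * (1 + (2 / b) * Real.exp ((b / 2) * ‖v‖ ^ 2)) := by
          apply mul_le_mul_of_nonneg_left _ hp.le
          linarith
      _ = Real.exp (-b * ‖v‖ ^ 2) + (2 / b) * Real.exp (-(b / 2) * ‖v‖ ^ 2) := by
          rw [mul_add, mul_one, ← h3]; ring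

abbrev E3 := EuclideanSpace ℝ (Fin 3)

lemma aux_grad (α s : ℝ) (hα0 : 0 < α) (hs : 0 < s)
    (μ : EuclideanSpace ℝ (Fin 3)) (G : EuclideanSpace ℝ (Fin 3) → ℝ)
    (hG : ∀ x, G x = α * Real.exp (-‖x - μ‖ ^ 2 / (2 * s ^ 2)))
    (hG1 : ∀ x, G x < 1) (x : EuclideanSpace ℝ (Fin 3)) :
    HasGradientAt (fun y => Real.log (1 - G y)) ((G x / ((1 - G x) * s ^ 2)) • (x - μ)) x := by
  have hs2 : (s:ℝ) ^ 2 ≠ 0 := by positivity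
  have h1G : (1 : ℝ) - G x ≠ 0 := by have := hG1 x; linarith
  set c : ℝ := -(2 * s ^ 2)⁻¹ with hc
  have h0 : HasFDerivAt (fun y : E3 => y - μ) (ContinuousLinearMap.id ℝ E3) x :=
    (hasFDerivAt_id x).sub_const μ
  have h1 := (h0.inner ℝ h0)
  have h2 := h1.const_mul c
  have h3 := h2.exp
  have h4 := h3.const_mul α
  have h5 := h4.const_sub 1
  have hGx : α * Real.exp (c * ⟪x - μ, x - μ⟫) = G x := by
    rw [hG x, real_inner_self_eq_norm_sq]
    congr 2
    rw [hc]; field_simp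
  have h6 := h5.log (by rw [hGx]; exact h1G)
  have hfun : (fun y : E3 => Real.log (1 - α * Real.exp (c * ⟪y - μ, y - μ⟫)))
      = fun y => Real.log (1 - G y) := by
    funext y
    rw [hG y, real_inner_self_eq_norm_sq]
    congr 3
    rw [hc]; field_simp
  rw [hasGradientAt_iff_hasFDerivAt]
  rw [← hfun]
  refine HasFDerivAt.congr_fderiv h6 ?_; symm
  ext u
  simp only [InnerProductSpace.toDual_apply_apply, ContinuousLinearMap.coe_smul', Pi.smul_apply,
    ContinuousLinearMap.coe_comp', Function.comp_apply, ContinuousLinearMap.prod_apply,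
    ContinuousLinearMap.coe_id', id_eq, fderivInnerCLM_apply, ContinuousLinearMap.neg_apply,
    smul_eq_mul, real_inner_smul_left]
  rw [real_inner_comm u (x - μ), ← hGx]
  have h1G' : (1:ℝ) - α * Real.exp (c * ⟪x - μ, x - μ⟫) ≠ 0 := by rw [hGx]; exact h1G
  simp only [hc] at h1G' ⊢
  generalize hI : ⟪x - μ, x - μ⟫ = I at h1G' ⊢
  generalize hJ : ⟪u, x - μ⟫ = J
  generalize hT : Real.exp (-(2 * s ^ 2)⁻¹ * I) = t at h1G' ⊢
  field_simp
  ring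

set_option maxHeartbeats 1600000 in
theorem stmt19 (α s : ℝ) (hα : α ∈ Set.Ioo (0 : ℝ) 1) (hs : 0 < s)
    (μ n : EuclideanSpace ℝ (Fin 3)) (hn : ‖n‖ = 1)
    (G : EuclideanSpace ℝ (Fin 3) → ℝ)
    (hG : ∀ x, G x = α * Real.exp (-‖x - μ‖ ^ 2 / (2 * s ^ 2)))
    (W : EuclideanSpace ℝ (Fin 3) → EuclideanSpace ℝ (Fin 3))
    (hW : ∀ x, W x = (if 0 ≤ ⟪n, x - μ⟫ then (1 : ℝ) else 0) •
      gradient (fun y => Real.log (1 - G y)) x) :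
    ∃ c : ℝ, c ≠ 0 ∧ (∫ x, G x • W x) = c • n := by
  obtain ⟨hα0, hα1⟩ := hα
  have hs2 : (0:ℝ) < s ^ 2 := by positivity
  have hb : (0:ℝ) < (s ^ 2)⁻¹ := by positivity
  set b : ℝ := (s ^ 2)⁻¹ with hbdef
  have hargle : ∀ x : E3, -‖x - μ‖ ^ 2 / (2 * s ^ 2) ≤ 0 := fun x =>
    div_nonpos_of_nonpos_of_nonneg (neg_nonpos.mpr (by positivity)) (by positivity)
  have hG0 : ∀ x, 0 < G x := fun x => by rw [hG x]; positivity
  have hGle : ∀ x, G x ≤ α := by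
    intro x
    rw [hG x]
    nlinarith [Real.exp_le_one_iff.mpr (hargle x)]
  have hG1 : ∀ x, G x < 1 := fun x => lt_of_le_of_lt (hGle x) hα1
  have hgrad : ∀ x, gradient (fun y => Real.log (1 - G y)) x
      = (G x / ((1 - G x) * s ^ 2)) • (x - μ) :=
    fun x => (aux_grad α s hα0 hs μ G hG hG1 x).gradient
  set f : E3 → ℝ := fun x =>
    (if 0 ≤ ⟪n, x - μ⟫ then (1:ℝ) else 0) * (G x ^ 2 / ((1 - G x) * s ^ 2)) with hfdef
  have hFW : ∀ x, G x • W x = f x • (x - μ) := by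
    intro x
    rw [hW x, hgrad x, smul_smul, smul_smul, hfdef]
    congr 1
    ring
  -- continuity and measurability
  have hGc : Continuous G := by
    rw [show G = fun x => α * Real.exp (-‖x - μ‖ ^ 2 / (2 * s ^ 2)) from funext hG]
    fun_prop
  have hrc : Continuous (fun x => G x ^ 2 / ((1 - G x) * s ^ 2)) := by
    apply (hGc.pow 2).div ((continuous_const.sub hGc).mul continuous_const)
    intro x
    have := hG1 x
    have : (0:ℝ) < (1 - G x) * s ^ 2 := by nlinarith
    exact ne_of_gt this
  have hinnerc : Continuous (fun x : E3 => ⟪n, x - μ⟫) :=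
    Continuous.inner continuous_const (continuous_id.sub continuous_const)
  have hindm : Measurable (fun x : E3 => (if 0 ≤ ⟪n, x - μ⟫ then (1:ℝ) else 0)) := by
    apply Measurable.ite _ measurable_const measurable_const
    exact measurableSet_le measurable_const hinnerc.measurable
  have hfm : Measurable f := hindm.mul hrc.measurable
  -- bound on f
  set K : ℝ := α ^ 2 / ((1 - α) * s ^ 2) with hKdef
  have hK0 : 0 < K := by
    apply div_pos (by positivity)
    nlinarith
  have hGsq : ∀ x, G x ^ 2 = α ^ 2 * Real.exp (-b * ‖x - μ‖ ^ 2) := by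
    intro x
    rw [hG x, mul_pow, sq (Real.exp _), ← Real.exp_add, hbdef]
    congr 1
    field_simp
    ring
  have hf0 : ∀ x, 0 ≤ f x := by
    intro x
    rw [hfdef]
    dsimp only
    have h1 : (0:ℝ) < (1 - G x) * s ^ 2 := by nlinarith [hG1 x]
    have h2 : (0:ℝ) ≤ G x ^ 2 / ((1 - G x) * s ^ 2) := div_nonneg (sq_nonneg _) h1.le
    split_ifs <;> simp [h2]
  have hfb : ∀ x, |f x| ≤ K * Real.exp (-b * ‖x - μ‖ ^ 2) := by
    intro x
    rw [abs_of_nonneg (hf0 x), hfdef]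
    dsimp only
    have h1 : (0:ℝ) < (1 - G x) * s ^ 2 := by nlinarith [hG1 x]
    have step1 : (if 0 ≤ ⟪n, x - μ⟫ then (1:ℝ) else 0) * (G x ^ 2 / ((1 - G x) * s ^ 2))
        ≤ G x ^ 2 / ((1 - G x) * s ^ 2) := by
      split_ifs <;> simp [div_nonneg (sq_nonneg _) h1.le]
    refine step1.trans ?_
    rw [hGsq x, hKdef, div_mul_eq_mul_div]
    gcongr
    · nlinarith [hGle x]
  -- master integrable function
  have hMint : Integrable (fun x : E3 => Real.exp (-b * ‖x - μ‖ ^ 2) * ‖x - μ‖) :=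
    (aux_gauss_int_mul_norm (V := E3) hb).comp_sub_right μ
  have habs_inner : ∀ x : E3, |⟪n, x - μ⟫| ≤ ‖x - μ‖ := by
    intro x
    have := abs_real_inner_le_norm n (x - μ)
    rwa [hn, one_mul] at this
  -- integrability of the pieces
  have hInt_hs : Integrable (fun x : E3 => f x * ⟪n, x - μ⟫) := by
    refine (hMint.const_mul K).mono' ((hfm.mul hinnerc.measurable).aestronglyMeasurable) ?_
    filter_upwards with x
    rw [Real.norm_eq_abs, abs_mul]
    calc |f x| * |⟪n, x - μ⟫| ≤ (K * Real.exp (-b * ‖x - μ‖ ^ 2)) * ‖x - μ‖ :=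
          mul_le_mul (hfb x) (habs_inner x) (abs_nonneg _) (by positivity)
      _ = K * (Real.exp (-b * ‖x - μ‖ ^ 2) * ‖x - μ‖) := by ring
  have hInt_h : Integrable (fun x : E3 => (f x * ⟪n, x - μ⟫) • n) := hInt_hs.smul_const n
  set g : E3 → E3 := fun x => f x • ((x - μ) - ⟪n, x - μ⟫ • n) with hgdef
  have hInt_g : Integrable g := by
    refine (hMint.const_mul (2 * K)).mono' ?_ ?_
    · exact (hfm.aestronglyMeasurable.smul
        (((continuous_id.sub continuous_const).sub
          (hinnerc.smul continuous_const)).aestronglyMeasurable))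
    · filter_upwards with x
      rw [hgdef]
      dsimp only
      rw [norm_smul, Real.norm_eq_abs]
      calc |f x| * ‖(x - μ) - ⟪n, x - μ⟫ • n‖
          ≤ (K * Real.exp (-b * ‖x - μ‖ ^ 2)) * (2 * ‖x - μ‖) := by
            apply mul_le_mul (hfb x) ?_ (norm_nonneg _) (by positivity)
            calc ‖(x - μ) - ⟪n, x - μ⟫ • n‖ ≤ ‖x - μ‖ + ‖⟪n, x - μ⟫ • n‖ := norm_sub_le _ _
              _ ≤ ‖x - μ‖ + ‖x - μ‖ := by
                  rw [norm_smul, Real.norm_eq_abs, hn, mul_one]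
                  linarith [habs_inner x]
              _ = 2 * ‖x - μ‖ := by ring
        _ = 2 * K * (Real.exp (-b * ‖x - μ‖ ^ 2) * ‖x - μ‖) := by ring
  -- reflection symmetry
  have hnn : ⟪n, n⟫ = (1:ℝ) := by
    rw [real_inner_self_eq_norm_sq, hn]; norm_num
  set R : E3 ≃ₗᵢ[ℝ] E3 := Submodule.reflection (ℝ ∙ n) with hRdef
  have hRapp : ∀ y : E3, R y = (2 * ⟪n, y⟫) • n - y := by
    intro y
    rw [hRdef, Submodule.reflection_singleton_apply, hn]
    norm_num [two_smul, two_mul, add_smul]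
  set T : E3 → E3 := fun x => μ + R (x - μ) with hTdef
  have hTT : ∀ x, T (T x) = x := by
    intro x
    rw [hTdef]
    dsimp only
    rw [add_sub_cancel_left, Submodule.reflection_reflection, add_comm, sub_add_cancel]
  have hTmeas : Measurable T := by
    rw [hTdef]
    exact (continuous_const.add
      (R.continuous.comp (continuous_id.sub continuous_const))).measurable
  have hTmp : MeasurePreserving T := by
    have h1 : MeasurePreserving (fun x : E3 => x - μ) := measurePreserving_sub_right volume μ
    have h2 : MeasurePreserving (fun x : E3 => R x) := R.measurePreserving
    have h3 : MeasurePreserving (fun x : E3 => μ + x) := measurePreserving_add_left volume μ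
    exact (h3.comp h2).comp h1
  set Te : E3 ≃ᵐ E3 := ⟨⟨T, T, hTT, hTT⟩, hTmeas, hTmeas⟩ with hTedef
  have hinnT : ∀ x, ⟪n, T x - μ⟫ = ⟪n, x - μ⟫ := by
    intro x
    rw [hTdef]
    dsimp only
    rw [add_sub_cancel_left, hRapp, inner_sub_right, real_inner_smul_right, hnn]
    ring
  have hnormT : ∀ x, ‖T x - μ‖ = ‖x - μ‖ := by
    intro x
    rw [hTdef]
    dsimp only
    rw [add_sub_cancel_left]
    exact R.norm_map _
  have hfT : ∀ x, f (T x) = f x := by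
    intro x
    rw [hfdef]
    dsimp only
    rw [hinnT, hG (T x), hG x, hnormT]
  have hvecT : ∀ x, (T x - μ) - ⟪n, T x - μ⟫ • n = -((x - μ) - ⟪n, x - μ⟫ • n) := by
    intro x
    rw [hinnT]
    rw [show T x - μ = R (x - μ) by rw [hTdef]; dsimp only; rw [add_sub_cancel_left]]
    rw [hRapp]
    module
  have hgT : ∀ x, g (T x) = -(g x) := by
    intro x
    rw [hgdef]
    dsimp only
    rw [hfT, hvecT, smul_neg]
  have hgint0 : (∫ x, g x) = 0 := by
    have h1 : (∫ x, g (T x)) = ∫ x, g x := hTmp.integral_comp Te.measurableEmbedding g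
    have h2 : (∫ x, g (T x)) = -(∫ x, g x) := by
      simp_rw [hgT]
      exact integral_neg g
    have h3 : -(∫ x, g x) = ∫ x, g x := by rw [← h2, h1]
    have h4 : (2:ℝ) • (∫ x, g x) = 0 := by
      rw [two_smul]
      nth_rewrite 1 [← h3]
      exact neg_add_cancel _
    rcases smul_eq_zero.mp h4 with h | h
    · norm_num at h
    · exact h
  -- split the integral
  have hsplit : ∀ x : E3, f x • (x - μ) = (f x * ⟪n, x - μ⟫) • n + g x := by
    intro x
    rw [hgdef]
    dsimp only
    module
  set c : ℝ := ∫ x, f x * ⟪n, x - μ⟫ with hcdef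
  have hmain : (∫ x, G x • W x) = c • n := by
    calc (∫ x, G x • W x) = ∫ x, f x • (x - μ) := by
          exact integral_congr_ae (Filter.Eventually.of_forall hFW)
      _ = ∫ x, ((f x * ⟪n, x - μ⟫) • n + g x) := by
          exact integral_congr_ae (Filter.Eventually.of_forall hsplit)
      _ = (∫ x, (f x * ⟪n, x - μ⟫) • n) + ∫ x, g x := integral_add hInt_h hInt_g
      _ = c • n := by
          rw [hgint0, add_zero, integral_smul_const]
  -- positivity of c
  have hnonneg : ∀ x, 0 ≤ f x * ⟪n, x - μ⟫ := by
    intro x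
    rcases le_or_gt 0 (⟪n, x - μ⟫) with h | h
    · exact mul_nonneg (hf0 x) h
    · have : f x = 0 := by
        rw [hfdef]
        dsimp only
        rw [if_neg (not_le.mpr h), zero_mul]
      rw [this, zero_mul]
  have hsubset : {x : E3 | 0 < ⟪n, x - μ⟫} ⊆ Function.support (fun x => f x * ⟪n, x - μ⟫) := by
    intro x hx
    have hx' : 0 < ⟪n, x - μ⟫ := hx
    have hfpos : 0 < f x := by
      rw [hfdef]
      dsimp only
      rw [if_pos hx'.le, one_mul]
      apply div_pos (pow_pos (hG0 x) 2)
      nlinarith [hG1 x]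
    exact ne_of_gt (mul_pos hfpos hx')
  have hUopen : IsOpen {x : E3 | 0 < ⟪n, x - μ⟫} := isOpen_lt continuous_const hinnerc
  have hUne : ({x : E3 | 0 < ⟪n, x - μ⟫}).Nonempty := by
    refine ⟨μ + n, ?_⟩
    show (0:ℝ) < ⟪n, μ + n - μ⟫
    rw [add_sub_cancel_left, hnn]
    norm_num
  have hUpos : 0 < volume {x : E3 | 0 < ⟪n, x - μ⟫} := hUopen.measure_pos volume hUne
  have hcpos : 0 < c := by
    rw [hcdef]
    rw [integral_pos_iff_support_of_nonneg hnonneg hInt_hs]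
    exact lt_of_lt_of_le hUpos (measure_mono hsubset)
  exact ⟨c, ne_of_gt hcpos, hmain⟩

end
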